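/- arXiv:1711.10509 — 2 statements merged into one kernel-verified Lean document; each statement's English description precedes it below -/
import Mathlib

section
/- For every k ≥ 1, the determinant D = V(2^0,2^1,…,2^{k−1}) equals the product, taken over all nonzero vectors α = (α_1,…,α_k) ∈ F₂^k, of the linear polynomials α_1·x_1 + ⋯ + α_k·x_k. -/
open MvPolynomial

/-- `Vdm k t` is the determinant of the `k × k` matrix whose `(i, j)` entry is `xᵢ ^ t j`,
in `F₂[x₁, …, x_k]`. -/
noncomputable def Vdm (k : ℕ) (t : Fin k → ℕ) : MvPolynomial (Fin k) (ZMod 2) :=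
  Matrix.det (Matrix.of fun i j : Fin k => (X i : MvPolynomial (Fin k) (ZMod 2)) ^ t j)

/-- `D k = V(2^0, 2^1, …, 2^(k-1))`. -/
noncomputable def D (k : ℕ) : MvPolynomial (Fin k) (ZMod 2) :=
  Vdm k fun j => 2 ^ (j : ℕ)

/-- `N k ℓ j` is the Vandermonde determinant whose exponent tuple lists the 2-powers
`2^0, …, 2^(k-1)` with `2^j` omitted, followed by `2^ℓ`. -/
noncomputable def N (k ℓ j : ℕ) : MvPolynomial (Fin k) (ZMod 2) :=
  Vdm k fun i =>
    if (i : ℕ) + 1 < k then (if (i : ℕ) < j then 2 ^ (i : ℕ) else 2 ^ ((i : ℕ) + 1))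
    else 2 ^ ℓ

/- `G k m` is the sum of all monomials of total degree `m` in `x₁, …, x_k` in which
every nonzero exponent is a power of 2. -/
open Classical in
noncomputable def G (k m : ℕ) : MvPolynomial (Fin k) (ZMod 2) :=
  ∑ d : Fin k → Fin (m + 1),
    if (∑ i, (d i : ℕ)) = m ∧ ∀ i, (d i : ℕ) ≠ 0 → ∃ e, (d i : ℕ) = 2 ^ e then
      ∏ i, (X i : MvPolynomial (Fin k) (ZMod 2)) ^ (d i : ℕ)
    else 0


abbrev R2 (k : ℕ) := MvPolynomial (Fin k) (ZMod 2)

instance (k : ℕ) : CharP (R2 k) 2 :=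
  charP_of_injective_algebraMap' (A := R2 k) (ZMod 2) 2

instance (k : ℕ) : CharP (Polynomial (R2 k)) 2 :=
  charP_of_injective_ringHom (Polynomial.C_injective (R := R2 k)) 2

noncomputable def lin (k : ℕ) (β : Fin k → ZMod 2) : R2 k :=
  ∑ i, C (β i) * X i

lemma zmod2_pow_pow (a : ZMod 2) (j : ℕ) : a ^ (2 ^ j) = a := by
  induction j with
  | zero => simp
  | succ j ih => rw [pow_succ, pow_mul, ih]; exact ZMod.pow_card a

lemma lin_eval (k : ℕ) (β : Fin k → ZMod 2) (i : Fin k) :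
    eval (Pi.single i (1 : ZMod 2)) (lin k β) = β i := by
  simp [lin, Pi.single_apply, mul_ite, Finset.sum_ite_eq']

lemma lin_injective (k : ℕ) : Function.Injective (lin k) := by
  intro a b hab
  funext i
  rw [← lin_eval k a i, ← lin_eval k b i, hab]

noncomputable def Fp (k : ℕ) : Polynomial (R2 k) :=
  Matrix.det (Matrix.of fun i j : Fin (k + 1) =>
    (MvPolynomial.finSuccEquiv (ZMod 2) k (X i)) ^ (2 ^ (j : ℕ)))

noncomputable def D' (k : ℕ) : MvPolynomial (Fin k) (ZMod 2) :=
  Matrix.det (Matrix.of fun i j : Fin k => (X i : MvPolynomial (Fin k) (ZMod 2)) ^ (2 ^ (j : ℕ)))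

lemma phi_D (k : ℕ) : finSuccEquiv (ZMod 2) k (D' (k + 1)) = Fp k := by
  rw [D', show (finSuccEquiv (ZMod 2) k : R2 (k+1) → Polynomial (R2 k)) =
      ((finSuccEquiv (ZMod 2) k : R2 (k+1) →+* Polynomial (R2 k)) : R2 (k+1) → Polynomial (R2 k)) from rfl,
    RingHom.map_det, Fp]
  congr 1
  ext i j
  simp [Matrix.map_apply]

lemma Fp_eval (k : ℕ) (β : Fin k → ZMod 2) : (Fp k).eval (lin k β) = 0 := by
  classical
  have hdet : (Fp k).eval (lin k β) =
      Matrix.det (Matrix.of fun i j : Fin (k + 1) =>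
        ((Fin.cons (lin k β) (fun i => X i) : Fin (k+1) → R2 k) i) ^ (2 ^ (j : ℕ))) := by
    rw [Fp, show (Polynomial.eval (lin k β) : Polynomial (R2 k) → R2 k) =
        ((Polynomial.evalRingHom (lin k β)) : Polynomial (R2 k) → R2 k) from rfl,
      RingHom.map_det]
    congr 1
    ext i j
    simp only [RingHom.mapMatrix_apply, Matrix.map_apply, Matrix.of_apply, map_pow]
    congr 1
    refine Fin.cases ?_ (fun i => ?_) i
    · rw [finSuccEquiv_X_zero]; simp
    · rw [finSuccEquiv_X_succ]; simp
  set B : Matrix (Fin (k+1)) (Fin (k+1)) (R2 k) :=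
    Matrix.of fun i j : Fin (k + 1) =>
      ((Fin.cons (lin k β) (fun i => X i) : Fin (k+1) → R2 k) i) ^ (2 ^ (j : ℕ)) with hB
  rw [hdet]
  set c : Fin (k+1) → R2 k := Fin.cons 0 (fun i => C (β i)) with hc
  have hrow : ∑ r, c r • B r = B 0 := by
    rw [Fin.sum_univ_succ]
    simp only [hc, Fin.cons_zero, Fin.cons_succ, zero_smul, zero_add]
    funext j
    simp only [Finset.sum_apply, Pi.smul_apply, smul_eq_mul, hB, Matrix.of_apply,
      Fin.cons_zero, Fin.cons_succ]
    rw [lin, sum_pow_char_pow]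
    refine Finset.sum_congr rfl fun i _ => ?_
    rw [mul_pow, ← map_pow, zmod2_pow_pow]
  have h := Matrix.det_updateRow_sum B 0 c
  rw [hrow, Matrix.updateRow_eq_self] at h
  rw [h]
  simp [hc]

lemma Fp_expand (k : ℕ) : Fp k =
    ∑ j : Fin (k + 1), Polynomial.C
        (Matrix.det (Matrix.of fun i' j' : Fin k =>
          (X i' : R2 k) ^ (2 ^ ((j.succAbove j' : ℕ))))) * Polynomial.X ^ (2 ^ (j : ℕ)) := by
  rw [Fp, Matrix.det_succ_row_zero]
  have hneg : (-1 : Polynomial (R2 k)) = 1 := by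
    have := CharTwo.neg_eq (R := Polynomial (R2 k)) 1
    simpa using this
  refine Finset.sum_congr rfl fun j _ => ?_
  rw [hneg, one_pow, one_mul]
  have h0 : (Matrix.of fun i j : Fin (k + 1) =>
      (MvPolynomial.finSuccEquiv (ZMod 2) k (X i)) ^ (2 ^ (j : ℕ))) 0 j
      = Polynomial.X ^ (2 ^ (j : ℕ)) := by
    simp [finSuccEquiv_X_zero]
  rw [h0, mul_comm]
  congr 1
  have : ((Matrix.of fun i j : Fin (k + 1) =>
      (MvPolynomial.finSuccEquiv (ZMod 2) k (X i)) ^ (2 ^ (j : ℕ))).submatrix Fin.succ j.succAbove)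
      = (Matrix.of fun i' j' : Fin k =>
          (X i' : R2 k) ^ (2 ^ ((j.succAbove j' : ℕ)))).map (Polynomial.C) := by
    ext i' j'
    simp [Matrix.submatrix_apply, Matrix.map_apply, finSuccEquiv_X_succ, map_pow]
  rw [this, ← RingHom.mapMatrix_apply, ← RingHom.map_det]

lemma Fp_coeff (k : ℕ) (m : ℕ) (hm : 2 ^ k ≤ m) :
    (Fp k).coeff m = if m = 2 ^ k then D' k else 0 := by
  rw [Fp_expand, Polynomial.finset_sum_coeff]
  have hterm : ∀ j : Fin (k + 1),
      (Polynomial.C (Matrix.det (Matrix.of fun i' j' : Fin k =>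
          (X i' : R2 k) ^ (2 ^ ((j.succAbove j' : ℕ))))) * Polynomial.X ^ (2 ^ (j : ℕ))).coeff m
      = if m = 2 ^ (j : ℕ) then (Matrix.det (Matrix.of fun i' j' : Fin k =>
          (X i' : R2 k) ^ (2 ^ ((j.succAbove j' : ℕ))))) else 0 := by
    intro j
    rw [Polynomial.coeff_C_mul, Polynomial.coeff_X_pow]
    split <;> simp
  rw [Finset.sum_congr rfl fun j _ => hterm j]
  by_cases hmk : m = 2 ^ k
  · subst hmk
    rw [if_pos rfl, Finset.sum_eq_single (Fin.last k)]
    · rw [if_pos (by simp [Fin.val_last]), D']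
      congr 1
      ext i' j'
      rw [Matrix.of_apply, Matrix.of_apply, Fin.succAbove_last, Fin.coe_castSucc]
    · intro j _ hj
      rw [if_neg]
      intro h
      have : (j : ℕ) = k := Nat.pow_right_injective (le_refl 2) h.symm
      exact hj (Fin.ext (by simp [Fin.val_last, this]))
    · intro h; exact absurd (Finset.mem_univ _) h
  · rw [if_neg hmk]
    refine Finset.sum_eq_zero fun j _ => ?_
    rw [if_neg]
    intro h
    have hj : (j : ℕ) ≤ k := Nat.lt_succ_iff.mp j.isLt
    have : (2:ℕ) ^ (j:ℕ) ≤ 2 ^ k := Nat.pow_le_pow_right (by norm_num) hj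
    omega

noncomputable def Qp (k : ℕ) : Polynomial (R2 k) :=
  ∏ β : Fin k → ZMod 2, (Polynomial.X - Polynomial.C (lin k β))

lemma Qp_monic (k : ℕ) : (Qp k).Monic :=
  Polynomial.monic_prod_of_monic _ _ fun _ _ => Polynomial.monic_X_sub_C _

lemma card_fun2 (k : ℕ) : Fintype.card (Fin k → ZMod 2) = 2 ^ k := by
  rw [Fintype.card_fun, ZMod.card, Fintype.card_fin]

lemma Qp_natDegree (k : ℕ) : (Qp k).natDegree = 2 ^ k := by
  rw [Qp, Polynomial.natDegree_prod_of_monic _ _ (fun _ _ => Polynomial.monic_X_sub_C _)]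
  simp [card_fun2]

lemma Qp_eval (k : ℕ) (β : Fin k → ZMod 2) : (Qp k).eval (lin k β) = 0 := by
  rw [Qp, Polynomial.eval_prod]
  exact Finset.prod_eq_zero (Finset.mem_univ β) (by simp)

lemma key (k : ℕ) : Fp k = Polynomial.C (D' k) * Qp k := by
  have hQc : (Qp k).coeff (2 ^ k) = 1 := by
    have := (Qp_monic k).coeff_natDegree
    rwa [Qp_natDegree k] at this
  set G : Polynomial (R2 k) := Fp k - Polynomial.C (D' k) * Qp k with hG
  have hdeg : G.degree < ((2 ^ k : ℕ) : WithBot ℕ) := by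
    rw [Polynomial.degree_lt_iff_coeff_zero]
    intro m hm
    have hm' : 2 ^ k ≤ m := by exact_mod_cast hm
    rw [hG, Polynomial.coeff_sub, Fp_coeff k m hm', Polynomial.coeff_C_mul]
    rcases eq_or_lt_of_le hm' with h | h
    · rw [if_pos h.symm, ← h, hQc, mul_one, sub_self]
    · rw [if_neg (by omega), Polynomial.coeff_eq_zero_of_natDegree_lt (by rw [Qp_natDegree]; exact h),
        mul_zero, sub_zero]
  have heval : ∀ β : Fin k → ZMod 2, G.eval (lin k β) = 0 := by
    intro β
    rw [hG, Polynomial.eval_sub, Fp_eval, Polynomial.eval_mul, Polynomial.eval_C, Qp_eval,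
      mul_zero, sub_zero]
  have hGz : G = 0 := by
    refine Polynomial.eq_zero_of_natDegree_lt_card_of_eval_eq_zero G (lin_injective k) heval ?_
    rw [card_fun2]
    by_cases h0 : G = 0
    · rw [h0]; simpa using Nat.pos_pow_of_pos k (by norm_num : 0 < 2)
    · exact (Polynomial.natDegree_lt_iff_degree_lt h0).mpr hdeg
  have := sub_eq_zero.mp hGz
  exact this

noncomputable def P' (k : ℕ) : R2 k :=
  ∏ α ∈ Finset.univ.filter (fun α : Fin k → ZMod 2 => α ≠ 0), lin k α

lemma phi_lin (k : ℕ) (α : Fin (k + 1) → ZMod 2) :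
    finSuccEquiv (ZMod 2) k (lin (k + 1) α)
      = Polynomial.C (MvPolynomial.C (α 0)) * Polynomial.X
        + Polynomial.C (lin k (α ∘ Fin.succ)) := by
  rw [lin, Fin.sum_univ_succ, map_add, map_mul, finSuccEquiv_X_zero]
  congr 1
  · congr 1
    simp [MvPolynomial.finSuccEquiv_apply]
  · rw [map_sum, lin, map_sum]
    refine Finset.sum_congr rfl fun i _ => ?_
    rw [map_mul, finSuccEquiv_X_succ]
    simp [MvPolynomial.finSuccEquiv_apply, Function.comp]

lemma cons_eq_zero_iff {k : ℕ} (c : ZMod 2) (β : Fin k → ZMod 2) :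
    (Fin.cons c β : Fin (k + 1) → ZMod 2) = 0 ↔ c = 0 ∧ β = 0 := by
  constructor
  · intro h
    refine ⟨by simpa using congrFun h 0, funext fun i => by simpa using congrFun h i.succ⟩
  · rintro ⟨rfl, rfl⟩
    funext i
    refine Fin.cases ?_ (fun i => ?_) i <;> simp

lemma phi_P (k : ℕ) :
    finSuccEquiv (ZMod 2) k (P' (k + 1)) = Polynomial.C (P' k) * Qp k := by
  classical
  rw [P', map_prod, Finset.prod_filter]
  have e1 : (∏ α : Fin (k + 1) → ZMod 2,
        if α ≠ 0 then finSuccEquiv (ZMod 2) k (lin (k + 1) α) else 1)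
      = ∏ p : ZMod 2 × (Fin k → ZMod 2),
        (if (Fin.cons p.1 p.2 : Fin (k+1) → ZMod 2) ≠ 0 then
          finSuccEquiv (ZMod 2) k (lin (k + 1) (Fin.cons p.1 p.2)) else 1) := by
    exact (Fintype.prod_equiv (Fin.consEquiv fun _ => ZMod 2) _ _ (fun p => rfl)).symm
  rw [e1, Fintype.prod_prod_type]
  have e2 : ∀ f : ZMod 2 → Polynomial (R2 k), ∏ c : ZMod 2, f c = f 0 * f 1 :=
    fun f => Fin.prod_univ_two f
  rw [e2]
  have h0 : (∏ β : Fin k → ZMod 2,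
        if (Fin.cons (0:ZMod 2) β : Fin (k+1) → ZMod 2) ≠ 0 then
          finSuccEquiv (ZMod 2) k (lin (k + 1) (Fin.cons 0 β)) else 1)
      = Polynomial.C (P' k) := by
    rw [P', Finset.prod_filter, map_prod]
    refine Finset.prod_congr rfl fun β _ => ?_
    have hiff : (Fin.cons (0:ZMod 2) β : Fin (k+1) → ZMod 2) ≠ 0 ↔ β ≠ 0 := by
      rw [Ne, cons_eq_zero_iff]; tauto
    by_cases hb : β = 0
    · rw [if_neg (by rw [hiff]; exact fun h => h hb), if_neg (fun h => h hb), map_one]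
    · rw [if_pos (hiff.mpr hb), if_pos hb, phi_lin]
      have hcomp : (Fin.cons (0:ZMod 2) β : Fin (k+1) → ZMod 2) ∘ Fin.succ = β :=
        funext fun i => Fin.cons_succ _ _ _
      rw [hcomp]
      simp [Fin.cons_zero]
  have h1 : (∏ β : Fin k → ZMod 2,
        if (Fin.cons (1:ZMod 2) β : Fin (k+1) → ZMod 2) ≠ 0 then
          finSuccEquiv (ZMod 2) k (lin (k + 1) (Fin.cons 1 β)) else 1)
      = Qp k := by
    rw [Qp]
    refine Finset.prod_congr rfl fun β _ => ?_
    have hne : (Fin.cons (1:ZMod 2) β : Fin (k+1) → ZMod 2) ≠ 0 := by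
      rw [Ne, cons_eq_zero_iff]
      rintro ⟨h, -⟩
      exact one_ne_zero h
    rw [if_pos hne, phi_lin]
    have hcomp : (Fin.cons (1:ZMod 2) β : Fin (k+1) → ZMod 2) ∘ Fin.succ = β :=
      funext fun i => Fin.cons_succ _ _ _
    rw [hcomp, CharTwo.sub_eq_add]
    simp only [Fin.cons_zero, map_one, one_mul]
  rw [h0, h1]

lemma main (k : ℕ) : D' k = P' k := by
  induction k with
  | zero =>
    rw [D', P']
    rw [Matrix.det_fin_zero]
    rw [Finset.prod_eq_one]
    intro α hα
    exact absurd (Subsingleton.elim α 0) (Finset.mem_filter.mp hα).2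
  | succ k ih =>
    apply (MvPolynomial.finSuccEquiv (ZMod 2) k).injective
    rw [phi_D, key, ih, ← phi_P]


theorem stmt1 (k : ℕ) (hk : 1 ≤ k) :
    D k = ∏ α ∈ Finset.univ.filter (fun α : Fin k → ZMod 2 => α ≠ 0),
      ∑ i, C (α i) * X i := by
  exact main k
end

section
/- Let k ≥ 1 and ℓ ≥ k+1. Then N(ℓ,0) = N(ℓ−1,k−1)² in F₂[x_1,…,x_k]. Consequently, if P, Q ∈ F₂[x_1,…,x_k] satisfy D·P = N(ℓ,0) and D·Q = N(ℓ−1,k−1), then P = D·Q² (this is the relation p_{ℓ,0} = c_0·p_{ℓ−1,k−1}², where c_0 = D). -/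
open MvPolynomial

-- helpers
lemma prod_X_pow (k : ℕ) (g : Fin k → ℕ) :
    (∏ i, (X i : MvPolynomial (Fin k) (ZMod 2)) ^ g i) =
      monomial (Finsupp.equivFunOnFinite.symm g) 1 := by
  set s : Fin k →₀ ℕ := Finsupp.equivFunOnFinite.symm g with hs
  have hgi : ∀ i, g i = s i := fun i => rfl
  rw [← prod_X_pow_eq_monomial (s := s)]
  rw [← Finset.prod_subset (Finset.subset_univ s.support)]
  · exact Finset.prod_congr rfl fun i _ => by rw [hgi]
  · intro i _ hi
    simp only [Finsupp.notMem_support_iff] at hi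
    rw [hgi i, hi, pow_zero]

lemma vdm_sq (k : ℕ) (t : Fin k → ℕ) : Vdm k t ^ 2 = Vdm k (fun j => 2 * t j) := by
  have h := RingHom.map_det (frobenius (MvPolynomial (Fin k) (ZMod 2)) 2)
    (Matrix.of fun i j : Fin k => (X i : MvPolynomial (Fin k) (ZMod 2)) ^ t j)
  unfold Vdm
  rw [← frobenius_def, h]
  congr 1
  ext i j
  simp [frobenius_def, Matrix.map_apply, ← pow_mul, mul_comm]

lemma D_ne_zero (k : ℕ) : D k ≠ 0 := by
  intro h
  have hc : coeff (Finsupp.equivFunOnFinite.symm fun i : Fin k => 2 ^ (i : ℕ)) (D k) = 1 := by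
    unfold D Vdm
    rw [Matrix.det_apply, coeff_sum]
    have key : ∀ σ : Equiv.Perm (Fin k),
        coeff (Finsupp.equivFunOnFinite.symm fun i : Fin k => 2 ^ (i : ℕ))
          (Equiv.Perm.sign σ • ∏ i, (Matrix.of fun i j : Fin k =>
            (X i : MvPolynomial (Fin k) (ZMod 2)) ^ (2 ^ (j : ℕ))) (σ i) i) =
          if σ = 1 then 1 else 0 := by
      intro σ
      have hprod : (∏ i, (Matrix.of fun i j : Fin k =>
          (X i : MvPolynomial (Fin k) (ZMod 2)) ^ (2 ^ (j : ℕ))) (σ i) i) =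
          monomial (Finsupp.equivFunOnFinite.symm fun j : Fin k => 2 ^ ((σ.symm j : Fin k) : ℕ)) 1 := by
        rw [← prod_X_pow]
        rw [← Equiv.prod_comp σ (fun j => (X j : MvPolynomial (Fin k) (ZMod 2)) ^ (2 ^ ((σ.symm j : Fin k) : ℕ)))]
        simp
      have hsign : (Equiv.Perm.sign σ •
          (monomial (Finsupp.equivFunOnFinite.symm fun j : Fin k => 2 ^ ((σ.symm j : Fin k) : ℕ))
            (1 : ZMod 2))) =
          monomial (Finsupp.equivFunOnFinite.symm fun j : Fin k => 2 ^ ((σ.symm j : Fin k) : ℕ)) 1 := by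
        rcases Int.units_eq_one_or (Equiv.Perm.sign σ) with hs | hs <;> rw [hs]
        · simp
        · simp [CharTwo.neg_eq]
      rw [hprod, hsign, coeff_monomial]
      by_cases hσ : σ = 1
      · subst hσ; simp; rfl
      · rw [if_neg, if_neg hσ]
        intro heq
        apply hσ
        have : ∀ j : Fin k, (2:ℕ) ^ ((σ.symm j : Fin k) : ℕ) = 2 ^ (j : ℕ) := by
          intro j
          have := congrArg (fun f => f j) (congrArg Finsupp.equivFunOnFinite heq)
          simpa using this
        have hsymm : σ.symm = 1 := by
          ext j
          have h2 := this j
          have h3 : ((σ.symm j : Fin k) : ℕ) = (j : ℕ) :=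
            Nat.pow_right_injective (le_refl 2) h2
          simpa using h3
        rw [← Equiv.symm_symm σ, hsymm]; rfl
    rw [Finset.sum_congr rfl fun σ _ => key σ]
    simp
  rw [h] at hc
  simp at hc


theorem stmt15 (k ℓ : ℕ) (hk : 1 ≤ k) (hℓ : k + 1 ≤ ℓ) :
    N k ℓ 0 = N k (ℓ - 1) (k - 1) ^ 2 ∧
      ∀ P Q : MvPolynomial (Fin k) (ZMod 2),
        D k * P = N k ℓ 0 → D k * Q = N k (ℓ - 1) (k - 1) → P = D k * Q ^ 2 := by
  have h1 : N k ℓ 0 = N k (ℓ - 1) (k - 1) ^ 2 := by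
    unfold N
    rw [vdm_sq]
    congr 1
    funext i
    by_cases h : (i : ℕ) + 1 < k
    · have h2 : (i : ℕ) < k - 1 := by omega
      simp [h, h2, pow_succ, mul_comm]
    · have hℓ1 : 1 ≤ ℓ := by omega
      simp only [h, if_false]
      rw [← pow_succ']
      congr 1
      omega
  refine ⟨h1, fun P Q hP hQ => ?_⟩
  have : D k * P = D k * (D k * Q ^ 2) := by
    rw [hP, h1, ← hQ]; ring
  exact mul_left_cancel₀ (D_ne_zero k) this
end
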